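/- Let k and α be real numbers with 0 < k ≤ 1 and α ≥ 1, and set w = ((1+k)^α − 1)/k^α. Let a and b be real numbers with a > 0 and 0 ≤ b ≤ k·a. Then (a+b)^α ≥ a^α + w·b^α. -/

import Mathlib

open Real Set in
private lemma aux_mono (c α : ℝ) (hc : 0 ≤ c) (hα : 1 ≤ α) :
    MonotoneOn (fun u : ℝ => (u + c) ^ α - u ^ α) (Set.Ici 0) := by
  have hα0 : (0:ℝ) ≤ α := le_trans zero_le_one hα
  have hder : ∀ u : ℝ, HasDerivAt (fun u : ℝ => (u + c) ^ α - u ^ α)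
      (α * (u + c) ^ (α - 1) - α * u ^ (α - 1)) u := by
    intro u
    have h1 : HasDerivAt (fun u : ℝ => (u + c) ^ α) (α * (u + c) ^ (α - 1)) u := by
      have := (Real.hasDerivAt_rpow_const (x := u + c) (p := α) (Or.inr hα)).comp u
        ((hasDerivAt_id u).add_const c)
      simpa [Function.comp_def] using this
    exact h1.sub (Real.hasDerivAt_rpow_const (Or.inr hα))
  apply monotoneOn_of_deriv_nonneg (convex_Ici 0)
  · exact fun u _ => (hder u).continuousAt.continuousWithinAt
  · exact fun u _ => (hder u).differentiableAt.differentiableWithinAt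
  · intro u hu
    rw [interior_Ici] at hu
    rw [(hder u).deriv]
    have := Real.rpow_le_rpow (le_of_lt hu) (le_add_of_nonneg_right hc) (by linarith : (0:ℝ) ≤ α - 1)
    nlinarith

theorem stmt_6 (k α a b : ℝ) (hk0 : 0 < k) (hk1 : k ≤ 1) (hα : 1 ≤ α)
    (ha : 0 < a) (hb0 : 0 ≤ b) (hbk : b ≤ k * a) :
    (a + b) ^ α ≥ a ^ α + ((1 + k) ^ α - 1) / k ^ α * b ^ α := by
  have hα0 : (0:ℝ) < α := lt_of_lt_of_le one_pos hα
  rcases eq_or_lt_of_le hb0 with hb | hb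
  · rw [← hb, Real.zero_rpow (ne_of_gt hα0)]
    simp
  set t := b / a with ht
  have ht0 : 0 < t := div_pos hb ha
  have htk : t ≤ k := (div_le_iff₀ ha).mpr (by linarith [hbk])
  set s := k / t with hs
  have hs1 : 1 ≤ s := (le_div_iff₀ ht0).mpr (by linarith)
  have hst : s * t = k := div_mul_cancel₀ k (ne_of_gt ht0)
  have hs0 : 0 < s := lt_of_lt_of_le one_pos hs1
  have hmono := aux_mono k α (le_of_lt hk0) hα (Set.mem_Ici.mpr zero_le_one)
    (Set.mem_Ici.mpr (le_trans zero_le_one hs1)) hs1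
  simp only at hmono
  rw [Real.one_rpow] at hmono
  have hsk : s + k = s * (1 + t) := by rw [← hst]; ring
  have hmul : (s + k) ^ α = s ^ α * (1 + t) ^ α := by
    rw [hsk, Real.mul_rpow (le_of_lt hs0) (by linarith)]
  have hsα : s ^ α = k ^ α / t ^ α := Real.div_rpow (le_of_lt hk0) (le_of_lt ht0) α
  have htα : 0 < t ^ α := Real.rpow_pos_of_pos ht0 α
  have hkα : 0 < k ^ α := Real.rpow_pos_of_pos hk0 α
  have hkey : t ^ α * ((1 + k) ^ α - 1) ≤ k ^ α * ((1 + t) ^ α - 1) := by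
    have h1 : (1 + k) ^ α - 1 ≤ s ^ α * ((1 + t) ^ α - 1) := by
      rw [mul_sub, mul_one, ← hmul]; linarith
    rw [hsα] at h1
    rw [div_mul_eq_mul_div, le_div_iff₀ htα] at h1
    linarith [h1]
  -- now transfer back
  have haα : 0 < a ^ α := Real.rpow_pos_of_pos ha α
  have hab : a + b = a * (1 + t) := by rw [ht]; field_simp
  have habα : (a + b) ^ α = a ^ α * (1 + t) ^ α := by
    rw [hab, Real.mul_rpow (le_of_lt ha) (by linarith)]
  have hbα : b ^ α = t ^ α * a ^ α := by
    rw [← Real.mul_rpow (le_of_lt ht0) (le_of_lt ha), ht]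
    field_simp
  rw [habα, hbα, ge_iff_le, div_mul_eq_mul_div]
  have h2 : ((1 + k) ^ α - 1) * (t ^ α * a ^ α) / k ^ α ≤ ((1 + t) ^ α - 1) * a ^ α := by
    rw [div_le_iff₀ hkα]
    nlinarith
  nlinarith [h2]
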